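/- arXiv:2410.12666 — 2 statements merged into one kernel-verified Lean document; each statement's English description precedes it below -/
import Mathlib

section
/- With the intervals Jₙ and sets L_N as in the Manoussakis–Pelczar-Barwacz construction, the following are equivalent for infinite M, N ⊆ ℕ: (a) ΓL₁(L_M, L_N) < ∞; (b) ΓL₁(L_{M∪N}, L_N) < ∞; (c) M \ N is finite. -/
open Finset Filter

/-- A Schreier set: a finite set of naturals whose cardinality is at most its minimum
(elements are automatically positive when nonempty). -/
def IsSchreier (F : Finset ℕ) : Prop := ∀ h : F.Nonempty, F.card ≤ F.min' h

/-- A maximal Schreier set: nonempty with cardinality equal to its minimum. -/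
def IsMaxSchreier (F : Finset ℕ) : Prop := ∃ h : F.Nonempty, F.card = F.min' h

/-- A (possibly empty) list of nonempty successive Schreier sets. -/
def SchreierChainList (C : List (Finset ℕ)) : Prop :=
  (∀ F ∈ C, IsSchreier F ∧ F.Nonempty) ∧
  C.Chain' (fun F G => ∀ a ∈ F, ∀ b ∈ G, a < b)

/-- A Schreier chain: a nonempty finite list of nonempty successive Schreier sets. -/
def IsSchreierChain (C : List (Finset ℕ)) : Prop := C ≠ [] ∧ SchreierChainList C

def chainUnion (C : List (Finset ℕ)) : Finset ℕ := C.foldr (· ∪ ·) ∅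

noncomputable def mu (p : ℝ) (x : ℕ → ℝ) (F : Finset ℕ) : ℝ :=
  (∑ n ∈ F, |x n| ^ p) ^ (1 / p)

/-- The p-th Schreier norm of a (finitely supported) sequence. -/
noncomputable def schreierNorm (p : ℝ) (x : ℕ → ℝ) : ℝ :=
  sSup {r | ∃ F : Finset ℕ, IsSchreier F ∧ F.Nonempty ∧ r = mu p x F}

noncomputable def betaNorm (p : ℝ) (x : ℕ → ℝ) (C : List (Finset ℕ)) : ℝ :=
  ((C.map fun F => (∑ n ∈ F, |x n|) ^ p).sum) ^ (1 / p)

/-- The p-th Baernstein norm of a (finitely supported) sequence. -/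
noncomputable def baernsteinNorm (p : ℝ) (x : ℕ → ℝ) : ℝ :=
  sSup {r | ∃ C : List (Finset ℕ), IsSchreierChain C ∧ r = betaNorm p x C}

/-- The Schreier covering number of a finite set. -/
noncomputable def tau1 (A : Finset ℕ) : ℕ :=
  sInf {m | ∃ C : List (Finset ℕ), SchreierChainList C ∧ C.length = m ∧ A ⊆ chainUnion C}

/-- Increasing enumeration of a set of naturals (0-indexed). -/
noncomputable def enumSet (M : Set ℕ) : ℕ → ℕ := Nat.nth (· ∈ M)

/-- `M(J)`: the image of an index set `J` under the increasing enumeration of `M`. -/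
noncomputable def subImage (M : Set ℕ) (J : Finset ℕ) : Finset ℕ := J.image (enumSet M)

/-- The Gasparis–Leung index `ΓL₁(M, N) ∈ ℕ ∪ {∞}`. -/
noncomputable def GLindex (M N : Set ℕ) : ℕ∞ :=
  ⨆ J ∈ {J : Finset ℕ | IsSchreier (subImage N J)}, (tau1 (subImage M J) : ℕ∞)

lemma mem_chainUnion {x : ℕ} {C : List (Finset ℕ)} :
    x ∈ chainUnion C ↔ ∃ E ∈ C, x ∈ E := by
  induction C with
  | nil => simp [chainUnion]
  | cons E C ih =>
    show x ∈ E ∪ chainUnion C ↔ _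
    simp [ih, Finset.mem_union]

lemma schreier_singleton {a : ℕ} (ha : 1 ≤ a) : IsSchreier {a} := by
  intro h
  simp [ha]

lemma exists_chain_split (A S T : Finset ℕ) (hA : A ⊆ S ∪ T)
    (hS1 : ∀ a ∈ S, 1 ≤ a) (hST : ∀ a ∈ S, ∀ b ∈ T, a < b)
    (hT : IsSchreier T) :
    ∃ C : List (Finset ℕ), SchreierChainList C ∧ C.length ≤ S.card + 1 ∧
      A ⊆ chainUnion C := by
  classical
  set l₂ : List (Finset ℕ) := if T.Nonempty then [T] else [] with hl₂
  refine ⟨((S.sort (· ≤ ·)).map fun a => ({a} : Finset ℕ)) ++ l₂, ⟨?_, ?_⟩, ?_, ?_⟩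
  · intro E hE
    rcases List.mem_append.1 hE with h | h
    · rcases List.mem_map.1 h with ⟨a, ha, rfl⟩
      have ha' : a ∈ S := (Finset.mem_sort _).1 ha
      exact ⟨schreier_singleton (hS1 a ha'), Finset.singleton_nonempty a⟩
    · rw [hl₂] at h
      split_ifs at h with hTne
      · simp only [List.mem_singleton] at h
        subst h; exact ⟨hT, hTne⟩
      · simp at h
  · show List.IsChain _ _; rw [List.isChain_append]
    refine ⟨?_, ?_, ?_⟩
    · rw [List.isChain_map]
      have : (S.sort (· ≤ ·)).Pairwise (· < ·) := (Finset.sortedLT_sort S).pairwise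
      refine List.Pairwise.isChain ?_
      refine this.imp ?_
      intro a b hab
      intro x hx y hy
      simp only [Finset.mem_singleton] at hx hy
      subst hx; subst hy; exact hab
    · rw [hl₂]; split_ifs <;> simp
    · intro E hE E' hE'
      have hEmem : E ∈ (S.sort (· ≤ ·)).map fun a => ({a} : Finset ℕ) :=
        List.mem_of_mem_getLast? hE
      have hE'mem : E' ∈ l₂ := List.mem_of_mem_head? hE'
      rcases List.mem_map.1 hEmem with ⟨a, ha, rfl⟩
      have ha' : a ∈ S := (Finset.mem_sort _).1 ha
      rw [hl₂] at hE'mem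
      split_ifs at hE'mem with hTne
      · simp only [List.mem_singleton] at hE'mem
        subst hE'mem
        intro x hx y hy
        rw [Finset.mem_singleton] at hx
        rw [hx]
        exact hST a ha' y hy
      · simp at hE'mem
  · rw [List.length_append, List.length_map, Finset.length_sort]
    have : l₂.length ≤ 1 := by rw [hl₂]; split_ifs <;> simp
    omega
  · intro x hx
    rcases Finset.mem_union.1 (hA hx) with h | h
    · refine mem_chainUnion.2 ⟨{x}, ?_, Finset.mem_singleton_self x⟩
      refine List.mem_append.2 (Or.inl ?_)
      exact List.mem_map.2 ⟨x, (Finset.mem_sort _).2 h, rfl⟩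
    · refine mem_chainUnion.2 ⟨T, ?_, h⟩
      refine List.mem_append.2 (Or.inr ?_)
      rw [hl₂]
      rw [if_pos ⟨x, h⟩]
      simp

lemma tau1_set_nonempty (A : Finset ℕ) (hA1 : ∀ a ∈ A, 1 ≤ a) :
    {m | ∃ C : List (Finset ℕ), SchreierChainList C ∧ C.length = m ∧
      A ⊆ chainUnion C}.Nonempty := by
  obtain ⟨C, hC, _, hcov⟩ := exists_chain_split A A ∅ (by simp) hA1 (by simp)
    (by intro h; simp at h)
  exact ⟨C.length, C, hC, rfl, hcov⟩

lemma tau1_le_split (A S T : Finset ℕ) (hA : A ⊆ S ∪ T)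
    (hS1 : ∀ a ∈ S, 1 ≤ a) (hST : ∀ a ∈ S, ∀ b ∈ T, a < b)
    (hT : IsSchreier T) : tau1 A ≤ S.card + 1 := by
  obtain ⟨C, hC, hlen, hcov⟩ := exists_chain_split A S T hA hS1 hST hT
  exact le_trans (Nat.sInf_le ⟨C, hC, rfl, hcov⟩) hlen

lemma le_tau1 (A : Finset ℕ) (hA1 : ∀ a ∈ A, 1 ≤ a) (B : ℕ)
    (h : ∀ C, SchreierChainList C → A ⊆ chainUnion C → B ≤ C.length) :
    B ≤ tau1 A := by
  obtain ⟨C, hC, hlen, hcov⟩ := Nat.sInf_mem (tau1_set_nonempty A hA1)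
  rw [tau1, ← hlen]
  exact h C hC hcov


lemma chain_pairwise : ∀ (C : List (Finset ℕ)), (∀ F ∈ C, F.Nonempty) →
    C.Chain' (fun F G => ∀ a ∈ F, ∀ b ∈ G, a < b) →
    C.Pairwise (fun F G => ∀ a ∈ F, ∀ b ∈ G, a < b) := by
  intro C
  induction C with
  | nil => intro _ _; exact List.Pairwise.nil
  | cons E C ih =>
    intro hne hch
    have hp := ih (fun F hF => hne F (List.mem_cons_of_mem _ hF)) hch.tail
    refine List.pairwise_cons.2 ⟨?_, hp⟩
    intro E' hE'
    cases C with
    | nil => simp at hE'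
    | cons F C' =>
      obtain ⟨hEF, _⟩ := List.isChain_cons_cons.1 hch
      rcases List.mem_cons.1 hE' with rfl | hE'2
      · exact hEF
      · have hFE' := (List.pairwise_cons.1 hp).1 E' hE'2
        obtain ⟨f, hf⟩ := hne F (by simp)
        exact fun a ha b hb => lt_trans (hEF a ha f hf) (hFE' f hf b hb)

lemma mem_of_sandwich {C : List (Finset ℕ)} (hC : SchreierChainList C)
    {E : Finset ℕ} (hE : E ∈ C) {x lo hi : ℕ}
    (hx : x ∈ chainUnion C) (hlo : lo ∈ E) (hhi : hi ∈ E)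
    (h1 : lo < x) (h2 : x < hi) : x ∈ E := by
  obtain ⟨E', hE', hxE'⟩ := mem_chainUnion.1 hx
  have hpw := chain_pairwise C (fun F hF => (hC.1 F hF).2) hC.2
  rw [List.pairwise_iff_getElem] at hpw
  obtain ⟨i, hi', hEi⟩ := List.mem_iff_getElem.1 hE
  obtain ⟨j, hj', hEj⟩ := List.mem_iff_getElem.1 hE'
  rcases lt_trichotomy i j with h | h | h
  · exfalso
    have := hpw i j hi' hj' h hi (by rw [hEi]; exact hhi) x (by rw [hEj]; exact hxE')
    omega
  · subst h
    rw [← hEi, hEj]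
    exact hxE'
  · exfalso
    have := hpw j i hj' hi' h x (by rw [hEj]; exact hxE') lo (by rw [hEi]; exact hlo)
    omega

lemma blocks_bound {n : ℕ} (H : Fin n → Finset ℕ)
    (hmax : ∀ i, IsMaxSchreier (H i))
    (hsucc : ∀ i j : Fin n, i < j → ∀ a ∈ H i, ∀ b ∈ H j, a < b)
    (C : List (Finset ℕ)) (hC : SchreierChainList C)
    (hcov : Finset.univ.biUnion H ⊆ chainUnion C) :
    n ≤ 2 * C.length := by
  classical
  have hHne : ∀ i, (H i).Nonempty := fun i => (hmax i).choose
  have hmem : ∀ i : Fin n, (H i).max' (hHne i) ∈ chainUnion C := fun i =>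
    hcov (Finset.mem_biUnion.2 ⟨i, Finset.mem_univ i, Finset.max'_mem _ _⟩)
  have hex : ∀ i : Fin n, ∃ k : ℕ, k < C.length ∧ (H i).max' (hHne i) ∈ C.getD k ∅ := by
    intro i
    obtain ⟨E, hE, hxE⟩ := mem_chainUnion.1 (hmem i)
    obtain ⟨k, hk, hEk⟩ := List.mem_iff_getElem.1 hE
    refine ⟨k, hk, ?_⟩
    rw [List.getD_eq_getElem _ _ hk, hEk]
    exact hxE
  choose g hg1 hg2 using hex
  have key := Finset.card_le_mul_card_image_of_maps_to
    (f := g) (s := (Finset.univ : Finset (Fin n))) (t := Finset.range C.length)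
    (fun i _ => Finset.mem_range.2 (hg1 i)) 2 ?_
  · simpa using key
  intro k _
  by_contra hcard
  push_neg at hcard
  set s := ({i ∈ (Finset.univ : Finset (Fin n)) | g i = k}) with hs
  have h2 : 2 < s.card := hcard
  have hsne : s.Nonempty := Finset.card_pos.1 (by omega)
  set i := s.min' hsne with hidef
  set k' := s.max' hsne with hkdef
  have hik : i ∈ s := Finset.min'_mem _ _
  have hkk : k' ∈ s := Finset.max'_mem _ _
  have hne3 : ((s.erase i).erase k').Nonempty := by
    rw [← Finset.card_pos]
    have e1 : (s.erase i).card = s.card - 1 := Finset.card_erase_of_mem hik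
    have e2 : ((s.erase i).erase k').card ≥ (s.erase i).card - 1 :=
      Finset.pred_card_le_card_erase
    omega
  obtain ⟨j, hj⟩ := hne3
  have hji : j ≠ k' := (Finset.mem_erase.1 hj).1
  have hjs' := (Finset.mem_erase.1 hj).2
  have hjne : j ≠ i := (Finset.mem_erase.1 hjs').1
  have hjs : j ∈ s := (Finset.mem_erase.1 hjs').2
  have hij : i < j := lt_of_le_of_ne (Finset.min'_le _ _ hjs) (Ne.symm hjne)
  have hjk : j < k' := lt_of_le_of_ne (Finset.le_max' _ _ hjs) hji
  have hgi : g i = k := (Finset.mem_filter.1 hik).2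
  have hgj : g j = k := (Finset.mem_filter.1 hjs).2
  have hgk : g k' = k := (Finset.mem_filter.1 hkk).2
  set E : Finset ℕ := C.getD k ∅ with hEdef
  have hkC : k < C.length := hgi ▸ hg1 i
  have hEC : E ∈ C := by
    rw [hEdef, List.getD_eq_getElem _ _ hkC]
    exact List.getElem_mem hkC
  have hloE : (H i).max' (hHne i) ∈ E := by rw [hEdef, ← hgi]; exact hg2 i
  have hhiE : (H k').max' (hHne k') ∈ E := by rw [hEdef, ← hgk]; exact hg2 k'
  set lo := (H i).max' (hHne i) with hlodef
  set hi := (H k').max' (hHne k') with hhidef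
  have hHjE : H j ⊆ E := by
    intro x hx
    refine mem_of_sandwich hC hEC
      (hcov (Finset.mem_biUnion.2 ⟨j, Finset.mem_univ j, hx⟩)) hloE hhiE ?_ ?_
    · exact hsucc i j hij lo (Finset.max'_mem _ _) x hx
    · exact hsucc j k' hjk x hx hi (Finset.max'_mem _ _)
  have hloHj : lo ∉ H j := by
    intro hmem'
    exact lt_irrefl lo (hsucc i j hij lo (Finset.max'_mem _ _) lo hmem')
  have hins : insert lo (H j) ⊆ E := by
    intro x hx
    rcases Finset.mem_insert.1 hx with rfl | hx
    · exact hloE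
    · exact hHjE hx
  have hcard1 : (H j).card + 1 ≤ E.card := by
    have := Finset.card_le_card hins
    rwa [Finset.card_insert_of_notMem hloHj] at this
  have hEne : E.Nonempty := ⟨lo, hloE⟩
  have hESch : E.card ≤ E.min' hEne := (hC.1 E hEC).1 hEne
  have hminlo : E.min' hEne ≤ lo := Finset.min'_le _ _ hloE
  have hlomin : lo < (H j).min' (hHne j) :=
    hsucc i j hij lo (Finset.max'_mem _ _) _ (Finset.min'_mem _ _)
  have hjcard : (H j).card = (H j).min' (hHne j) := by
    obtain ⟨h', hc⟩ := hmax j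
    rw [hc]
  omega
lemma setOf_mem_infinite {P : Set ℕ} (hP : P.Infinite) : (setOf (· ∈ P)).Infinite := by
  exact hP

lemma enumSet_injective {P : Set ℕ} (hP : P.Infinite) : Function.Injective (enumSet P) :=
  Nat.nth_injective (setOf_mem_infinite hP)

lemma nth_comp {P Q : Set ℕ} (hP : P.Infinite) (hQ : Q.Infinite)
    {D : Finset ℕ} (hD : ∀ x, x ∈ P → x ∉ Q → x ∈ D) {j : ℕ} (hjd : D.card ≤ j) :
    Nat.nth (· ∈ Q) (j - D.card) ≤ Nat.nth (· ∈ P) j := by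
  classical
  have hP' := setOf_mem_infinite hP
  have hQ' := setOf_mem_infinite hQ
  set x := Nat.nth (· ∈ P) j with hx
  have hcount : Nat.count (· ∈ P) (x + 1) = j + 1 :=
    Nat.count_nth_succ_of_infinite hP' j
  have hsub : (Finset.range (x+1)).filter (· ∈ P) ⊆
      ((Finset.range (x+1)).filter (· ∈ Q)) ∪ D := by
    intro y hy
    obtain ⟨hy1, hy2⟩ := Finset.mem_filter.1 hy
    by_cases hyQ : y ∈ Q
    · exact Finset.mem_union_left _ (Finset.mem_filter.2 ⟨hy1, hyQ⟩)
    · exact Finset.mem_union_right _ (hD y hy2 hyQ)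
  have hcount2 : j + 1 ≤ Nat.count (· ∈ Q) (x+1) + D.card := by
    rw [← hcount, Nat.count_eq_card_filter_range, Nat.count_eq_card_filter_range]
    exact le_trans (Finset.card_le_card hsub) (Finset.card_union_le _ _)
  have hlt : j - D.card < Nat.count (· ∈ Q) (x+1) := by omega
  have := Nat.nth_lt_of_lt_count hlt
  omega

lemma subImage_card {P : Set ℕ} (hP : P.Infinite) (J : Finset ℕ) :
    (subImage P J).card = J.card :=
  Finset.card_image_of_injective _ (enumSet_injective hP)

lemma card_filter_lt_mono {A : Finset ℕ} {a b : ℕ} (ha : a ∈ A) (hab : a < b) :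
    (A.filter (· < a)).card < (A.filter (· < b)).card := by
  classical
  have hsub : insert a (A.filter (· < a)) ⊆ A.filter (· < b) := by
    intro y hy
    rcases Finset.mem_insert.1 hy with rfl | hy
    · exact Finset.mem_filter.2 ⟨ha, hab⟩
    · obtain ⟨hy1, hy2⟩ := Finset.mem_filter.1 hy
      exact Finset.mem_filter.2 ⟨hy1, lt_trans hy2 hab⟩
  have hnotmem : a ∉ A.filter (· < a) := by
    intro h; exact lt_irrefl a (Finset.mem_filter.1 h).2
  have := Finset.card_le_card hsub
  rw [Finset.card_insert_of_notMem hnotmem] at this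
  omega

lemma GL_ne_top {P Q : Set ℕ} (hP : P.Infinite) (hQ : Q.Infinite)
    (hP1 : ∀ x ∈ P, 1 ≤ x) (hPQ : (P \ Q).Finite) : GLindex P Q ≠ ⊤ := by
  classical
  set D := hPQ.toFinset with hDdef
  set d := D.card with hd
  have hbound : GLindex P Q ≤ ((d + 1 : ℕ) : ℕ∞) := by
    rw [GLindex]
    refine iSup₂_le ?_
    intro J hJ
    rw [Nat.cast_le]
    set A := subImage P J with hA
    set S := A.filter (fun a => (A.filter (· < a)).card < d) with hS
    set T := A.filter (fun a => d ≤ (A.filter (· < a)).card) with hT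
    have hAmem : ∀ a ∈ A, a ∈ P := by
      intro a ha
      obtain ⟨j, hj, rfl⟩ := Finset.mem_image.1 ha
      exact Nat.nth_mem_of_infinite (setOf_mem_infinite hP) j
    refine le_trans (tau1_le_split A S T ?_ ?_ ?_ ?_) ?_
    · intro a ha
      by_cases h : (A.filter (· < a)).card < d
      · exact Finset.mem_union_left _ (Finset.mem_filter.2 ⟨ha, h⟩)
      · exact Finset.mem_union_right _ (Finset.mem_filter.2 ⟨ha, le_of_not_gt h⟩)
    · intro a ha; exact hP1 a (hAmem a (Finset.mem_filter.1 ha).1)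
    · intro a ha b hb
      obtain ⟨haA, h1⟩ := Finset.mem_filter.1 ha
      obtain ⟨hbA, h2⟩ := Finset.mem_filter.1 hb
      by_contra hab
      push_neg at hab
      rcases eq_or_lt_of_le hab with heq | hab'
      · rw [heq] at h2; omega
      · have := card_filter_lt_mono hbA hab'
        omega
    · -- T is Schreier
      intro hTne
      have hcardA : ∀ t ∈ T, A.card ≤ t := by
        intro t ht
        obtain ⟨htA, htd⟩ := Finset.mem_filter.1 ht
        obtain ⟨j, hjJ, hjt⟩ := Finset.mem_image.1 htA
        have hJne : J.Nonempty := ⟨j, hjJ⟩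
        set j0 := J.min' hJne with hj0
        have hj0le : j0 ≤ j := Finset.min'_le _ _ hjJ
        have himg : A.filter (· < t) = (J.filter (· < j)).image (enumSet P) := by
          ext a
          constructor
          · intro haf
            obtain ⟨haA, hat⟩ := Finset.mem_filter.1 haf
            obtain ⟨j', hj'J, hj'a⟩ := Finset.mem_image.1 haA
            refine Finset.mem_image.2 ⟨j', Finset.mem_filter.2 ⟨hj'J, ?_⟩, hj'a⟩
            have hlt : enumSet P j' < enumSet P j := by rw [hj'a, hjt]; exact hat
            exact (Nat.nth_lt_nth (setOf_mem_infinite hP)).1 hlt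
          · intro haf
            obtain ⟨j', hj'f, hj'a⟩ := Finset.mem_image.1 haf
            obtain ⟨hj'J, hj'j⟩ := Finset.mem_filter.1 hj'f
            refine Finset.mem_filter.2 ⟨Finset.mem_image.2 ⟨j', hj'J, hj'a⟩, ?_⟩
            rw [← hj'a, ← hjt]
            exact (Nat.nth_lt_nth (setOf_mem_infinite hP)).2 hj'j
        have hcardf : (A.filter (· < t)).card = (J.filter (· < j)).card := by
          rw [himg]
          exact Finset.card_image_of_injective _ (enumSet_injective hP)
        have hdj : d ≤ (J.filter (· < j)).card := by rw [hcardf] at htd; exact htd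
        have hsubIco : J.filter (· < j) ⊆ Finset.Ico j0 j := by
          intro y hy
          obtain ⟨hy1, hy2⟩ := Finset.mem_filter.1 hy
          exact Finset.mem_Ico.2 ⟨Finset.min'_le _ _ hy1, hy2⟩
        have hIco : (J.filter (· < j)).card ≤ j - j0 := by
          have := Finset.card_le_card hsubIco
          rwa [Nat.card_Ico] at this
        have h1 : Nat.nth (· ∈ Q) (j - d) ≤ Nat.nth (· ∈ P) j := by
          refine nth_comp hP hQ ?_ (by omega)
          intro x hx1 hx2
          rw [hDdef, Set.Finite.mem_toFinset]
          exact ⟨hx1, hx2⟩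
        have h2 : Nat.nth (· ∈ Q) j0 ≤ Nat.nth (· ∈ Q) (j - d) :=
          (Nat.nth_le_nth (setOf_mem_infinite hQ)).2 (by omega)
        have h3 : (subImage Q J).card ≤ Nat.nth (· ∈ Q) j0 := by
          have hmem : Nat.nth (· ∈ Q) j0 ∈ subImage Q J :=
            Finset.mem_image.2 ⟨j0, Finset.min'_mem _ _, rfl⟩
          have hBne : (subImage Q J).Nonempty := ⟨_, hmem⟩
          exact le_trans (hJ hBne) (Finset.min'_le _ _ hmem)
        have h4 : A.card = (subImage Q J).card := by
          rw [hA, subImage_card hP, subImage_card hQ]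
        rw [← hjt]
        show A.card ≤ enumSet P j
        rw [h4]
        exact le_trans h3 (le_trans h2 h1)
      have hTsub : T.card ≤ A.card := Finset.card_le_card (Finset.filter_subset _ _)
      exact le_trans hTsub (hcardA _ (Finset.min'_mem _ hTne))
    · -- S.card + 1 ≤ d + 1
      have hScard : S.card ≤ d := by
        have hinj : Set.InjOn (fun a => (A.filter (· < a)).card) ↑S := by
          intro a ha b hb hfab
          simp only at hfab
          by_contra hne
          rcases lt_or_gt_of_ne hne with h | h
          · have := card_filter_lt_mono
              (Finset.mem_of_mem_filter _ (Finset.mem_coe.1 ha)) h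
            omega
          · have := card_filter_lt_mono
              (Finset.mem_of_mem_filter _ (Finset.mem_coe.1 hb)) h
            omega
        have himg2 : S.image (fun a => (A.filter (· < a)).card) ⊆ Finset.range d := by
          intro y hy
          obtain ⟨a, ha, rfl⟩ := Finset.mem_image.1 hy
          exact Finset.mem_range.2 (Finset.mem_filter.1 ha).2
        calc S.card = (S.image (fun a => (A.filter (· < a)).card)).card :=
              (Finset.card_image_of_injOn hinj).symm
          _ ≤ d := by simpa using Finset.card_le_card himg2
      omega
  intro htop
  rw [htop] at hbound
  exact (WithTop.coe_ne_top) (top_le_iff.1 hbound)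

lemma enumSet_count {P : Set ℕ} [DecidablePred (· ∈ P)] {x : ℕ} (hx : x ∈ P) :
    enumSet P (Nat.count (· ∈ P) x) = x := Nat.nth_count hx

/-- With the MPB intervals Jₙ = Fₙ ∪ Gₙ and L_N = ⋃_{n∈N} Jₙ, the following are
equivalent: ΓL₁(L_M, L_N) < ∞; ΓL₁(L_{M∪N}, L_N) < ∞; M \ N is finite. -/
theorem mpb_GLindex_finite_iff (F G : ℕ → Finset ℕ) (hF1 : F 1 = ∅)
    (hInt : ∀ n, 1 ≤ n → (∃ a b, F n = Finset.Icc a b) ∧ ∃ a b, G n = Finset.Icc a b)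
    (hGmax : ∀ n, 1 ≤ n → ∃ H : Fin n → Finset ℕ, (∀ i, IsMaxSchreier (H i)) ∧
      (∀ i j : Fin n, i < j → ∀ a ∈ H i, ∀ b ∈ H j, a < b) ∧
      G n = Finset.univ.biUnion H)
    (hFG : ∀ n, 1 ≤ n → ∀ a ∈ F n, ∀ b ∈ G n, a < b)
    (hGF : ∀ n, 1 ≤ n → ∀ a ∈ G n, ∀ b ∈ F (n + 1), a < b)
    (hpos : ∀ n, 1 ≤ n → ∀ a ∈ F n ∪ G n, 1 ≤ a)
    (hcover : ∀ m : ℕ, 1 ≤ m → ∃ n, 1 ≤ n ∧ m ∈ F n ∪ G n)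
    (hcard : ∀ n, 2 ≤ n → (F n).card = ∑ m ∈ Finset.Ico 1 n, ((F m).card + (G m).card))
    (M N : Set ℕ) (hM : M.Infinite) (hN : N.Infinite)
    (hM1 : ∀ m ∈ M, 1 ≤ m) (hN1 : ∀ n ∈ N, 1 ≤ n) :
    (GLindex (⋃ n ∈ M, ↑(F n ∪ G n)) (⋃ n ∈ N, ↑(F n ∪ G n)) ≠ ⊤ ↔ (M \ N).Finite) ∧
      (GLindex (⋃ n ∈ M ∪ N, ↑(F n ∪ G n)) (⋃ n ∈ N, ↑(F n ∪ G n)) ≠ ⊤ ↔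
        (M \ N).Finite) := by
  classical
  have hmemL : ∀ (R : Set ℕ) (x : ℕ),
      x ∈ (⋃ n ∈ R, ↑(F n ∪ G n) : Set ℕ) ↔ ∃ m ∈ R, x ∈ F m ∪ G m := by
    intro R x; simp
  have hGne : ∀ n, 1 ≤ n → (G n).Nonempty := by
    intro n hn
    obtain ⟨H, hmaxH, _, hGn⟩ := hGmax n hn
    obtain ⟨h0, _⟩ := hmaxH ⟨0, hn⟩
    obtain ⟨a, ha⟩ := h0
    exact ⟨a, by rw [hGn]; exact Finset.mem_biUnion.2 ⟨⟨0, hn⟩, Finset.mem_univ _, ha⟩⟩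
  have hFne : ∀ n, 2 ≤ n → (F n).Nonempty := by
    intro n hn
    rw [← Finset.card_pos, hcard n hn]
    have h1 : 1 ∈ Finset.Ico 1 n := Finset.mem_Ico.2 ⟨le_refl 1, by omega⟩
    have hG1 : 0 < (F 1).card + (G 1).card := by
      have := Finset.card_pos.2 (hGne 1 le_rfl)
      omega
    calc 0 < (F 1).card + (G 1).card := hG1
      _ ≤ _ := Finset.single_le_sum (f := fun m => (F m).card + (G m).card)
        (fun m _ => Nat.zero_le _) h1
  have hup : ∀ m, 1 ≤ m → ∀ a ∈ F m ∪ G m, ∀ b ∈ F (m+1) ∪ G (m+1), a < b := by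
    intro m hm a ha b hb
    obtain ⟨g, hg⟩ := hGne m hm
    obtain ⟨f', hf'⟩ := hFne (m+1) (by omega)
    have key2 : ∀ c ∈ G m, c < b := by
      intro c hc
      rcases Finset.mem_union.1 hb with h | h
      · exact hGF m hm c hc b h
      · exact lt_trans (hGF m hm c hc f' hf') (hFG (m+1) (by omega) f' hf' b h)
    rcases Finset.mem_union.1 ha with h | h
    · exact lt_trans (hFG m hm a h g hg) (key2 g hg)
    · exact key2 a h
  have hacross : ∀ m m', 1 ≤ m → m < m' → ∀ a ∈ F m ∪ G m, ∀ b ∈ F m' ∪ G m', a < b := by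
    intro m m' hm
    induction m' with
    | zero => intro h; omega
    | succ k ih =>
      intro hlt a ha b hb
      rcases Nat.lt_succ_iff_lt_or_eq.1 hlt with h | h
      · obtain ⟨g, hg⟩ := hGne k (by omega)
        exact lt_trans (ih h a ha g (Finset.mem_union_right _ hg))
          (hup k (by omega) g (Finset.mem_union_right _ hg) b hb)
      · subst h
        exact hup m hm a ha b hb
  have hLpos : ∀ (R : Set ℕ), (∀ m ∈ R, 1 ≤ m) →
      ∀ x ∈ (⋃ n ∈ R, ↑(F n ∪ G n) : Set ℕ), 1 ≤ x := by
    intro R hR1 x hx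
    obtain ⟨m, hmR, hxm⟩ := (hmemL R x).1 hx
    exact hpos m (hR1 m hmR) x hxm
  have hLinf : ∀ (R : Set ℕ), R.Infinite → (∀ m ∈ R, 1 ≤ m) →
      (⋃ n ∈ R, ↑(F n ∪ G n) : Set ℕ).Infinite := by
    intro R hR hR1
    have hmemf : ∀ n ∈ R, sInf (↑(G n) : Set ℕ) ∈ G n := by
      intro n hn
      have hne := hGne n (hR1 n hn)
      have hne' : (↑(G n) : Set ℕ).Nonempty := ⟨hne.choose, hne.choose_spec⟩
      exact Nat.sInf_mem hne'
    have hinj : Set.InjOn (fun n => sInf (↑(G n) : Set ℕ)) R := by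
      intro a ha b hb hab
      simp only at hab
      by_contra hne
      rcases lt_or_gt_of_ne hne with h | h
      · have := hacross a b (hR1 a ha) h _ (Finset.mem_union_right _ (hmemf a ha))
          _ (Finset.mem_union_right _ (hmemf b hb))
        omega
      · have := hacross b a (hR1 b hb) h _ (Finset.mem_union_right _ (hmemf b hb))
          _ (Finset.mem_union_right _ (hmemf a ha))
        omega
    have himg := Set.Infinite.image hinj hR
    refine Set.Infinite.mono ?_ himg
    intro y hy
    obtain ⟨n, hn, rfl⟩ := hy
    exact (hmemL R _).2 ⟨n, hn, Finset.mem_union_right _ (hmemf n hn)⟩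
  set Q : Set ℕ := ⋃ n ∈ N, ↑(F n ∪ G n) with hQdef
  have hQinf : Q.Infinite := hLinf N hN hN1
  have hfindir : ∀ (R : Set ℕ), (R \ N ⊆ M \ N) → (M \ N).Finite →
      ((⋃ n ∈ R, ↑(F n ∪ G n) : Set ℕ) \ Q).Finite := by
    intro R hRN hfin
    have hsub : (⋃ n ∈ R, ↑(F n ∪ G n) : Set ℕ) \ Q ⊆
        ⋃ n ∈ (M \ N), ↑(F n ∪ G n) := by
      intro x hx
      obtain ⟨hx1, hx2⟩ := hx
      obtain ⟨m, hmR, hxm⟩ := (hmemL R x).1 hx1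
      have hmN : m ∉ N := by
        intro hmN
        exact hx2 ((hmemL N x).2 ⟨m, hmN, hxm⟩)
      exact (hmemL _ x).2 ⟨m, hRN ⟨hmR, hmN⟩, hxm⟩
    exact Set.Finite.subset
      (Set.Finite.biUnion hfin (fun n _ => (F n ∪ G n).finite_toSet)) hsub
  have hinfdir : ∀ (R : Set ℕ), R.Infinite → (∀ m ∈ R, 1 ≤ m) →
      ∀ n : ℕ, 2 ≤ n → n ∈ R → n ∉ N →
      ∃ J : Finset ℕ, IsSchreier (subImage Q J) ∧
        n ≤ 2 * tau1 (subImage (⋃ n ∈ R, ↑(F n ∪ G n) : Set ℕ) J) := by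
    intro R hR hR1 n hn2 hnR hnN
    set P : Set ℕ := ⋃ n ∈ R, ↑(F n ∪ G n) with hPdef
    have hPinf : P.Infinite := hLinf R hR hR1
    have hn1 : 1 ≤ n := by omega
    have hGsub : ∀ x ∈ G n, x ∈ P := fun x hx =>
      (hmemL R x).2 ⟨n, hnR, Finset.mem_union_right _ hx⟩
    have hFsub : ∀ x ∈ F n, x ∈ P := fun x hx =>
      (hmemL R x).2 ⟨n, hnR, Finset.mem_union_left _ hx⟩
    set J : Finset ℕ := (G n).image (fun x => Nat.count (· ∈ P) x) with hJdef
    have himg : subImage P J = G n := by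
      rw [subImage, hJdef, Finset.image_image]
      refine (Finset.image_congr ?_).trans Finset.image_id
      intro x hx
      exact enumSet_count (hGsub x hx)
    obtain ⟨g0, hg0⟩ := hGne n hn1
    have hFGne : (F n ∪ G n).Nonempty := ⟨g0, Finset.mem_union_right _ hg0⟩
    set W := (F n ∪ G n).max' hFGne with hW
    have hWmem : W ∈ F n ∪ G n := Finset.max'_mem _ hFGne
    have hleW : ∀ x ∈ F n ∪ G n, x ≤ W := fun x hx => Finset.le_max' _ x hx
    have hGW : (G n).card ≤ W := by
      have hsub : G n ⊆ Finset.Icc 1 W := by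
        intro x hx
        exact Finset.mem_Icc.2 ⟨hpos n hn1 x (Finset.mem_union_right _ hx),
          hleW x (Finset.mem_union_right _ hx)⟩
      have := Finset.card_le_card hsub
      rwa [Nat.card_Icc, Nat.add_sub_cancel] at this
    have hQ' := setOf_mem_infinite hQinf
    have hFcount : ∀ x ∈ G n, (F n).card ≤ Nat.count (· ∈ P) x := by
      intro x hx
      rw [Nat.count_eq_card_filter_range]
      refine Finset.card_le_card ?_
      intro y hy
      exact Finset.mem_filter.2 ⟨Finset.mem_range.2 (hFG n hn1 y hy x hx), hFsub y hy⟩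
    have hQcount : Nat.count (· ∈ Q) (W + 1) ≤ (F n).card := by
      rw [Nat.count_eq_card_filter_range]
      have hsub : (Finset.range (W+1)).filter (· ∈ Q) ⊆
          ((Finset.Ico 1 n).filter (· ∈ N)).biUnion (fun m => F m ∪ G m) := by
        intro y hy
        obtain ⟨hy1, hy2⟩ := Finset.mem_filter.1 hy
        obtain ⟨m, hmN, hym⟩ := (hmemL N y).1 hy2
        have hm1 : 1 ≤ m := hN1 m hmN
        have hmn : m < n := by
          rcases lt_trichotomy m n with h | h | h
          · exact h
          · exact absurd (h ▸ hmN) hnN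
          · exfalso
            have h1 := hacross n m hn1 h W hWmem y hym
            have h2 := Finset.mem_range.1 hy1
            omega
        exact Finset.mem_biUnion.2
          ⟨m, Finset.mem_filter.2 ⟨Finset.mem_Ico.2 ⟨hm1, hmn⟩, hmN⟩, hym⟩
      refine le_trans (Finset.card_le_card hsub) ?_
      refine le_trans Finset.card_biUnion_le ?_
      rw [hcard n hn2]
      refine le_trans (Finset.sum_le_sum ?_)
        (Finset.sum_le_sum_of_subset (Finset.filter_subset _ _))
      intro m _
      exact Finset.card_union_le _ _
    have hSch : IsSchreier (subImage Q J) := by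
      intro hne
      have hcard1 : (subImage Q J).card ≤ W := by
        refine le_trans Finset.card_image_le (le_trans ?_ hGW)
        rw [hJdef]
        exact Finset.card_image_le
      have hmin := Finset.min'_mem _ hne
      obtain ⟨j, hjJ, hj⟩ := Finset.mem_image.1 hmin
      obtain ⟨x, hxG, hxj⟩ := Finset.mem_image.1 hjJ
      have h1 : Nat.count (· ∈ Q) (W+1) ≤ j := by
        rw [← hxj]
        exact le_trans hQcount (hFcount x hxG)
      have h2 : W + 1 ≤ Nat.nth (· ∈ Q) j := (Nat.count_le_iff_le_nth hQ').1 h1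
      have h3 : W + 1 ≤ (subImage Q J).min' hne := by
        rw [← hj]
        exact h2
      omega
    refine ⟨J, hSch, ?_⟩
    rw [himg]
    obtain ⟨HH, hmaxH, hsuccH, hGn⟩ := hGmax n hn1
    obtain ⟨C, hC, hlen, hcov⟩ := Nat.sInf_mem (tau1_set_nonempty (G n)
      (fun a ha => hpos n hn1 a (Finset.mem_union_right _ ha)))
    have hb := blocks_bound HH hmaxH hsuccH C hC (by rw [← hGn]; exact hcov)
    rw [tau1, ← hlen]
    exact hb
  have htopdir : ∀ (R : Set ℕ), R.Infinite → (∀ m ∈ R, 1 ≤ m) → M \ N ⊆ R \ N →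
      (M \ N).Infinite → GLindex (⋃ n ∈ R, ↑(F n ∪ G n)) Q = ⊤ := by
    intro R hR hR1 hsub hinf
    by_contra hne
    set B := (GLindex (⋃ n ∈ R, ↑(F n ∪ G n)) Q).toNat with hBdef
    have hB : ((B : ℕ) : ℕ∞) = GLindex (⋃ n ∈ R, ↑(F n ∪ G n)) Q := ENat.coe_toNat hne
    obtain ⟨n, hnMN, hn⟩ := hinf.exists_gt (2*B + 1)
    have hn2 : 2 ≤ n := by
      have := hnMN
      omega
    obtain ⟨J, hJSch, hJtau⟩ := hinfdir R hR hR1 n hn2 (hsub hnMN).1 hnMN.2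
    have hle : (tau1 (subImage (⋃ n ∈ R, ↑(F n ∪ G n)) J) : ℕ∞) ≤
        GLindex (⋃ n ∈ R, ↑(F n ∪ G n)) Q := by
      rw [GLindex]
      exact le_iSup₂ (f := fun J (_ : J ∈ {J : Finset ℕ | IsSchreier (subImage Q J)}) =>
        (tau1 (subImage (⋃ n ∈ R, ↑(F n ∪ G n)) J) : ℕ∞)) J hJSch
    rw [← hB] at hle
    have hle' : tau1 (subImage (⋃ n ∈ R, ↑(F n ∪ G n)) J) ≤ B := ENat.coe_le_coe.1 hle
    omega
  constructor
  · constructor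
    · intro hne
      by_contra hfin
      exact hne (htopdir M hM hM1 (fun x hx => hx) hfin)
    · intro hfin
      exact GL_ne_top (hLinf M hM hM1) hQinf (hLpos M hM1)
        (hfindir M (fun x hx => hx) hfin)
  · constructor
    · intro hne
      by_contra hfin
      exact hne (htopdir (M ∪ N) (hM.mono Set.subset_union_left)
        (fun m hm => hm.elim (hM1 m) (hN1 m)) (fun x hx => ⟨Or.inl hx.1, hx.2⟩) hfin)
    · intro hfin
      exact GL_ne_top (hLinf (M ∪ N) (hM.mono Set.subset_union_left)
          (fun m hm => hm.elim (hM1 m) (hN1 m))) hQinf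
        (hLpos (M ∪ N) (fun m hm => hm.elim (hM1 m) (hN1 m)))
        (hfindir (M ∪ N) (fun x hx => ⟨hx.1.resolve_right hx.2, hx.2⟩) hfin)
end

section
/- Let 1 < p < ∞ and let M, N be infinite sets of positive integers with ΓL₁(M, N) = C < ∞. Then for every k and all scalars α₁,…,α_k, ‖Σ_{j=1}^k αⱼ e_{nⱼ}‖_{B_p} ≤ C · ‖Σ_{j=1}^k αⱼ e_{mⱼ}‖_{B_p}, where M = {m₁ < m₂ < ⋯} and N = {n₁ < n₂ < ⋯} are the increasing enumerations; i.e., (e_m)_{m∈M} C-dominates (e_n)_{n∈N} in the Baernstein norm. -/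
open Finset Filter

/-! ### Auxiliary material -/

/-- The successiveness relation between finite sets. -/
def succRel (F G : Finset ℕ) : Prop := ∀ a ∈ F, ∀ b ∈ G, a < b

lemma schreier_subset {E F : Finset ℕ} (hF : IsSchreier F) (hEF : E ⊆ F) : IsSchreier E := by
  intro hE
  have hFne : F.Nonempty := hE.mono hEF
  have h1 : E.card ≤ F.card := Finset.card_le_card hEF
  have h2 : F.min' hFne ≤ E.min' hE := Finset.min'_le F _ (hEF (Finset.min'_mem E hE))
  exact h1.trans ((hF hFne).trans h2)

lemma pairwise_of_chain : ∀ {l : List (Finset ℕ)}, (∀ F ∈ l, F.Nonempty) →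
    l.Chain' succRel → l.Pairwise succRel := by
  intro l
  induction l with
  | nil => intro _ _; exact List.Pairwise.nil
  | cons F t ih =>
    intro hne hc
    rcases List.isChain_cons.mp hc with ⟨hhd, ht⟩
    have hpt : t.Pairwise succRel := ih (fun G hG => hne G (List.mem_cons_of_mem _ hG)) ht
    refine List.Pairwise.cons ?_ hpt
    intro G hG
    cases t with
    | nil => simp at hG
    | cons H t' =>
      have hFH : succRel F H := hhd H rfl
      rcases List.mem_cons.mp hG with rfl | hG'
      · exact hFH
      · have hHG : succRel H G := (List.pairwise_cons.mp hpt).1 G hG'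
        obtain ⟨h0, hH⟩ := hne H (by simp)
        intro a ha b hb
        exact (hFH a ha h0 hH).trans (hHG h0 hH b hb)

lemma mem_chainUnion_s18 {a : ℕ} : ∀ {l : List (Finset ℕ)}, a ∈ chainUnion l ↔ ∃ F ∈ l, a ∈ F := by
  intro l
  induction l with
  | nil => simp [chainUnion]
  | cons F t ih =>
    have : chainUnion (F :: t) = F ∪ chainUnion t := rfl
    rw [this]
    simp [Finset.mem_union, ih]

lemma sum_le_of_cover {f : ℕ → ℝ} (hf : ∀ a, 0 ≤ f a) :
    ∀ (l : List (Finset ℕ)) (A : Finset ℕ), A ⊆ chainUnion l →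
      ∑ a ∈ A, f a ≤ (l.map fun G => ∑ a ∈ G ∩ A, f a).sum := by
  intro l
  induction l with
  | nil =>
    intro A hA
    have : A = ∅ := Finset.subset_empty.mp hA
    simp [this]
  | cons G t ih =>
    intro A hA
    have hsplit : ∑ a ∈ A ∩ G, f a + ∑ a ∈ A \ G, f a = ∑ a ∈ A, f a :=
      Finset.sum_inter_add_sum_sdiff A G f
    have hsub : A \ G ⊆ chainUnion t := by
      intro a ha
      rcases Finset.mem_sdiff.mp ha with ⟨haA, hanG⟩
      have := hA haA
      have h2 : a ∈ G ∪ chainUnion t := this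
      rcases Finset.mem_union.mp h2 with h | h
      · exact absurd h hanG
      · exact h
    have h1 := ih (A \ G) hsub
    have h2 : ∑ a ∈ (A \ G), f a ≤ (t.map fun G' => ∑ a ∈ G' ∩ A, f a).sum := by
      refine h1.trans (List.sum_le_sum ?_)
      intro G' _
      exact Finset.sum_le_sum_of_subset_of_nonneg
        (Finset.inter_subset_inter (Finset.Subset.refl _) Finset.sdiff_subset) (fun i _ _ => hf i)
    calc ∑ a ∈ A, f a = ∑ a ∈ A ∩ G, f a + ∑ a ∈ A \ G, f a := hsplit.symm
      _ ≤ ∑ a ∈ G ∩ A, f a + (t.map fun G' => ∑ a ∈ G' ∩ A, f a).sum := by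
          rw [Finset.inter_comm]; exact add_le_add le_rfl h2
      _ = ((G :: t).map fun G' => ∑ a ∈ G' ∩ A, f a).sum := by simp

lemma sum_abs_ite (e : ℕ → ℕ) (he : Function.Injective e) (k : ℕ) (α : Fin k → ℝ)
    (F : Finset ℕ) :
    ∑ n ∈ F, |∑ j : Fin k, if e (j : ℕ) = n then α j else 0| =
      ∑ j ∈ Finset.univ.filter (fun j : Fin k => e (j : ℕ) ∈ F), |α j| := by
  have he' : Function.Injective (fun j : Fin k => e (j : ℕ)) :=
    he.comp Fin.val_injective
  have step1 : ∀ n, |∑ j : Fin k, if e (j : ℕ) = n then α j else 0| =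
      ∑ j : Fin k, if e (j : ℕ) = n then |α j| else 0 := by
    intro n
    by_cases hex : ∃ j : Fin k, e (j : ℕ) = n
    · obtain ⟨j₀, hj₀⟩ := hex
      have h1 : ∀ j : Fin k, (e (j : ℕ) = n) = (j = j₀) := by
        intro j
        apply propext
        constructor
        · intro h; exact he' (h.trans hj₀.symm)
        · rintro rfl; exact hj₀
      simp only [h1]
      rw [Finset.sum_ite_eq' Finset.univ j₀ α, Finset.sum_ite_eq' Finset.univ j₀ (fun j : Fin k => |α j|)]
      simp
    · push_neg at hex
      simp [hex]
  rw [Finset.sum_congr rfl (fun n _ => step1 n), Finset.sum_comm]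
  rw [Finset.sum_congr rfl (fun (j : Fin k) _ => Finset.sum_ite_eq F (e (j : ℕ)) (fun _ => |α j|))]
  rw [Finset.sum_filter]

lemma two_rpow_add (p : ℝ) (hp : 1 ≤ p) {a b : ℝ} (ha : 0 ≤ a) (hb : 0 ≤ b) :
    a ^ p + b ^ p ≤ (a + b) ^ p := by
  lift a to NNReal using ha
  lift b to NNReal using hb
  have := NNReal.add_rpow_le_rpow_add a b hp
  exact_mod_cast this

lemma list_superadd (p : ℝ) (hp : 1 ≤ p) :
    ∀ (l : List ℝ), (∀ a ∈ l, 0 ≤ a) → (l.map (· ^ p)).sum ≤ l.sum ^ p := by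
  intro l
  induction l with
  | nil =>
    intro _
    simp [Real.zero_rpow (by positivity : p ≠ 0)]
  | cons a t ih =>
    intro h
    have ha : 0 ≤ a := h a (by simp)
    have ht : ∀ b ∈ t, 0 ≤ b := fun b hb => h b (by simp [hb])
    have hts : 0 ≤ t.sum := List.sum_nonneg ht
    calc ((a :: t).map (· ^ p)).sum = a ^ p + (t.map (· ^ p)).sum := by simp
      _ ≤ a ^ p + t.sum ^ p := by linarith [ih ht]
      _ ≤ (a + t.sum) ^ p := two_rpow_add p hp ha hts
      _ = (a :: t).sum ^ p := by simp

lemma sum_rpow_le (p : ℝ) (hp : 1 < p) (l : List ℝ) (h : ∀ a ∈ l, 0 ≤ a) (c : ℕ)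
    (hc : l.length ≤ c) : l.sum ^ p ≤ (c : ℝ) ^ p * (l.map (· ^ p)).sum := by
  have hp0 : (0:ℝ) < p := lt_trans one_pos hp
  have hpne : p ≠ 0 := ne_of_gt hp0
  set S : ℝ := (l.map (· ^ p)).sum with hS
  have hS0 : 0 ≤ S := List.sum_nonneg (by
    intro b hb
    rcases List.mem_map.mp hb with ⟨a, ha, rfl⟩
    exact Real.rpow_nonneg (h a ha) p)
  have hbd : ∀ a ∈ l, a ≤ S ^ (1 / p) := by
    intro a ha
    have h1 : a ^ p ≤ S := List.single_le_sum (by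
        intro b hb
        rcases List.mem_map.mp hb with ⟨a', ha', rfl⟩
        exact Real.rpow_nonneg (h a' ha') p) _ (List.mem_map.mpr ⟨a, ha, rfl⟩)
    have h2 : (a ^ p) ^ (1 / p) ≤ S ^ (1 / p) :=
      Real.rpow_le_rpow (Real.rpow_nonneg (h a ha) p) h1 (by positivity)
    rwa [← Real.rpow_mul (h a ha), mul_one_div_cancel hpne, Real.rpow_one] at h2
  have hsum : l.sum ≤ (c : ℝ) * S ^ (1 / p) := by
    have := List.sum_le_card_nsmul l (S ^ (1 / p)) hbd
    have h2 : (l.length : ℝ) * S ^ (1 / p) ≤ (c : ℝ) * S ^ (1 / p) := by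
      apply mul_le_mul_of_nonneg_right _ (Real.rpow_nonneg hS0 _)
      exact_mod_cast hc
    calc l.sum ≤ (l.length : ℝ) * S ^ (1 / p) := by
          simpa [nsmul_eq_mul] using this
      _ ≤ (c : ℝ) * S ^ (1 / p) := h2
  have hls : 0 ≤ l.sum := List.sum_nonneg h
  calc l.sum ^ p ≤ ((c : ℝ) * S ^ (1 / p)) ^ p :=
        Real.rpow_le_rpow hls hsum (le_of_lt hp0)
    _ = (c : ℝ) ^ p * (S ^ (1 / p)) ^ p :=
        Real.mul_rpow (by positivity) (Real.rpow_nonneg hS0 _)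
    _ = (c : ℝ) ^ p * S := by
        rw [← Real.rpow_mul hS0, one_div_mul_cancel hpne, Real.rpow_one]

lemma filter_map_sum_eq {l : List (Finset ℕ)} (q : Finset ℕ → Bool) (f : Finset ℕ → ℝ)
    (h : ∀ a ∈ l, q a = false → f a = 0) :
    ((l.filter q).map f).sum = (l.map f).sum := by
  induction l with
  | nil => simp
  | cons a t ih =>
    have ht : ∀ b ∈ t, q b = false → f b = 0 := fun b hb => h b (by simp [hb])
    rcases hq : q a with _ | _
    · rw [List.filter_cons_of_neg (by simp [hq])]
      simp [ih ht, h a (by simp) hq]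
    · rw [List.filter_cons_of_pos (by simp [hq])]
      simp [ih ht]

lemma disjoint_chain_sum (f : ℕ → ℝ) :
    ∀ {l : List (Finset ℕ)}, l.Pairwise succRel →
      (l.map fun F => ∑ a ∈ F, f a).sum = ∑ a ∈ chainUnion l, f a := by
  intro l
  induction l with
  | nil => simp [chainUnion]
  | cons F t ih =>
    intro hl
    rcases List.pairwise_cons.mp hl with ⟨hhd, ht⟩
    have hdisj : Disjoint F (chainUnion t) := by
      rw [Finset.disjoint_left]
      intro a haF hau
      rcases mem_chainUnion_s18.mp hau with ⟨H, hHt, haH⟩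
      exact lt_irrefl a (hhd H hHt a haF a haH)
    have : chainUnion (F :: t) = F ∪ chainUnion t := rfl
    rw [this]
    simp only [List.map_cons, List.sum_cons, ih ht]
    exact (Finset.sum_union hdisj).symm

lemma exists_cover (A : Finset ℕ) (hA : ∀ a ∈ A, 0 < a) {c : ℕ} (hc : tau1 A ≤ c) :
    ∃ D, SchreierChainList D ∧ D.length ≤ c ∧ A ⊆ chainUnion D := by
  have hne : {m | ∃ D : List (Finset ℕ), SchreierChainList D ∧ D.length = m ∧
      A ⊆ chainUnion D}.Nonempty := by
    refine ⟨(A.sort (· ≤ ·)).length, (A.sort (· ≤ ·)).map (fun a => {a}), ?_, by simp, ?_⟩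
    · constructor
      · intro F hF
        rcases List.mem_map.mp hF with ⟨a, ha, rfl⟩
        have haA : a ∈ A := (Finset.mem_sort _).mp ha
        refine ⟨?_, Finset.singleton_nonempty a⟩
        intro h
        simpa using Nat.succ_le_of_lt (hA a haA)
      · change List.IsChain _ _; rw [List.isChain_map]
        have hs : List.Pairwise (· < ·) (A.sort (· ≤ ·)) := (Finset.sortedLT_sort A).pairwise
        refine List.IsChain.imp ?_ hs.isChain
        intro a b hab x hx y hy
        simp only [Finset.mem_singleton] at hx hy
        subst hx; subst hy; exact hab
    · intro a ha
      refine mem_chainUnion_s18.mpr ⟨{a}, ?_, Finset.mem_singleton_self a⟩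
      exact List.mem_map.mpr ⟨a, (Finset.mem_sort _).mpr ha, rfl⟩
  obtain ⟨D, hD, hlen, hcov⟩ := Nat.sInf_mem hne
  exact ⟨D, hD, le_trans (le_of_eq hlen) hc, hcov⟩

/-- The coordinate vector `∑ α j · e_{S(j)}`. -/
noncomputable def coordVec (S : Set ℕ) (k : ℕ) (α : Fin k → ℝ) : ℕ → ℝ :=
  fun n => ∑ j : Fin k, if enumSet S (j : ℕ) = n then α j else 0

/-- Index set of a finite set `F` relative to the enumeration of `N`, as a `Finset ℕ`. -/
noncomputable def Jv (N : Set ℕ) (k : ℕ) (F : Finset ℕ) : Finset ℕ :=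
  (Finset.univ.filter fun j : Fin k => enumSet N (j : ℕ) ∈ F).image Fin.val

lemma mem_Jv {N : Set ℕ} {k : ℕ} {F : Finset ℕ} {i : ℕ} :
    i ∈ Jv N k F ↔ ∃ j : Fin k, (j : ℕ) = i ∧ enumSet N (j : ℕ) ∈ F := by
  simp [Jv, and_comm]

lemma subImage_Jv_subset (N : Set ℕ) (k : ℕ) (F : Finset ℕ) :
    subImage N (Jv N k F) ⊆ F := by
  intro a ha
  rcases Finset.mem_image.mp ha with ⟨i, hi, rfl⟩
  rcases mem_Jv.mp hi with ⟨j, rfl, hj⟩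
  exact hj

lemma filter_AM (M : Set ℕ) (hM : M.Infinite) (N : Set ℕ) (k : ℕ) (F : Finset ℕ) :
    (Finset.univ.filter fun j : Fin k => enumSet M (j : ℕ) ∈ subImage M (Jv N k F)) =
      (Finset.univ.filter fun j : Fin k => enumSet N (j : ℕ) ∈ F) := by
  have heM : Function.Injective (enumSet M) := Nat.nth_injective hM
  ext j
  simp only [Finset.mem_filter, Finset.mem_univ, true_and]
  constructor
  · intro h
    rcases Finset.mem_image.mp h with ⟨i, hi, hei⟩
    have hij : i = (j : ℕ) := heM hei
    subst hij
    rcases mem_Jv.mp hi with ⟨j', hj', hj'F⟩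
    have : j' = j := Fin.val_injective hj'
    subst this
    exact hj'F
  · intro h
    exact Finset.mem_image.mpr ⟨(j : ℕ), mem_Jv.mpr ⟨j, rfl, h⟩, rfl⟩

lemma AM_succRel (M N : Set ℕ) (hM : M.Infinite) (hN : N.Infinite) (k : ℕ)
    {F F' : Finset ℕ} (hFF' : succRel F F') :
    succRel (subImage M (Jv N k F)) (subImage M (Jv N k F')) := by
  intro a ha b hb
  rcases Finset.mem_image.mp ha with ⟨i, hi, rfl⟩
  rcases Finset.mem_image.mp hb with ⟨i', hi', rfl⟩
  rcases mem_Jv.mp hi with ⟨j, rfl, hjF⟩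
  rcases mem_Jv.mp hi' with ⟨j', rfl, hjF'⟩
  have hNlt : enumSet N (j : ℕ) < enumSet N (j' : ℕ) := hFF' _ hjF _ hjF'
  have hjj : (j : ℕ) < (j' : ℕ) := (Nat.nth_strictMono hN).lt_iff_lt.mp hNlt
  exact (Nat.nth_strictMono hM) hjj

lemma coordVec_sum_abs (S : Set ℕ) (hS : S.Infinite) (k : ℕ) (α : Fin k → ℝ) (F : Finset ℕ) :
    ∑ n ∈ F, |coordVec S k α n| =
      ∑ j ∈ Finset.univ.filter (fun j : Fin k => enumSet S (j : ℕ) ∈ F), |α j| :=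
  sum_abs_ite (enumSet S) (Nat.nth_injective hS) k α F

lemma coordVec_sum_abs_le (S : Set ℕ) (hS : S.Infinite) (k : ℕ) (α : Fin k → ℝ)
    (F : Finset ℕ) : ∑ n ∈ F, |coordVec S k α n| ≤ ∑ j : Fin k, |α j| := by
  rw [coordVec_sum_abs S hS k α F]
  exact Finset.sum_le_sum_of_subset_of_nonneg (Finset.filter_subset _ _)
    (fun i _ _ => abs_nonneg _)

lemma coordVec_beta_le (p : ℝ) (hp : 1 < p) (S : Set ℕ) (hS : S.Infinite) (k : ℕ)
    (α : Fin k → ℝ) {Cy : List (Finset ℕ)} (hCy : IsSchreierChain Cy) :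
    betaNorm p (coordVec S k α) Cy ≤ ∑ j : Fin k, |α j| := by
  obtain ⟨hne, hall, hch⟩ := hCy
  have hpair : Cy.Pairwise succRel := pairwise_of_chain (fun F hF => (hall F hF).2) hch
  set f : Finset ℕ → ℝ := fun F => ∑ n ∈ F, |coordVec S k α n| with hf
  have hfn : ∀ F, 0 ≤ f F := fun F => Finset.sum_nonneg fun i _ => abs_nonneg _
  have e1 : (Cy.map fun F => (∑ n ∈ F, |coordVec S k α n|) ^ p) =
      (Cy.map f).map (· ^ p) := by rw [List.map_map]; rfl
  have h2 : ((Cy.map f).map (· ^ p)).sum ≤ (Cy.map f).sum ^ p := by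
    apply list_superadd p (le_of_lt hp)
    intro a ha
    rcases List.mem_map.mp ha with ⟨F, _, rfl⟩
    exact hfn F
  have h3 : (Cy.map f).sum = ∑ a ∈ chainUnion Cy, |coordVec S k α a| :=
    disjoint_chain_sum _ hpair
  have h4 : (Cy.map f).sum ≤ ∑ j : Fin k, |α j| := by
    rw [h3]; exact coordVec_sum_abs_le S hS k α _
  have h5 : (Cy.map f).sum ^ p ≤ (∑ j : Fin k, |α j|) ^ p := by
    apply Real.rpow_le_rpow (List.sum_nonneg ?_) h4 (by positivity)
    intro a ha
    rcases List.mem_map.mp ha with ⟨F, _, rfl⟩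
    exact hfn F
  have hBn : (0:ℝ) ≤ ∑ j : Fin k, |α j| := Finset.sum_nonneg fun j _ => abs_nonneg _
  have hpne : p ≠ 0 := by positivity
  calc betaNorm p (coordVec S k α) Cy
      = (((Cy.map f).map (· ^ p)).sum) ^ (1 / p) := by rw [betaNorm, e1]
    _ ≤ ((∑ j : Fin k, |α j|) ^ p) ^ (1 / p) := by
        apply Real.rpow_le_rpow ?_ (h2.trans h5) (by positivity)
        apply List.sum_nonneg
        intro a ha
        rcases List.mem_map.mp ha with ⟨b, hb, rfl⟩
        rcases List.mem_map.mp hb with ⟨F, _, rfl⟩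
        exact Real.rpow_nonneg (hfn F) p
    _ = ∑ j : Fin k, |α j| := by
        rw [← Real.rpow_mul hBn, mul_one_div_cancel hpne, Real.rpow_one]

lemma coordVec_bddAbove (p : ℝ) (hp : 1 < p) (S : Set ℕ) (hS : S.Infinite) (k : ℕ)
    (α : Fin k → ℝ) :
    BddAbove {r | ∃ Cy : List (Finset ℕ), IsSchreierChain Cy ∧
      r = betaNorm p (coordVec S k α) Cy} := by
  refine ⟨∑ j : Fin k, |α j|, ?_⟩
  rintro r ⟨Cy, hCy, rfl⟩
  exact coordVec_beta_le p hp S hS k α hCy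

lemma baernstein_coordVec_nonneg (p : ℝ) (hp : 1 < p) (S : Set ℕ) (hS : S.Infinite)
    (k : ℕ) (α : Fin k → ℝ) : 0 ≤ baernsteinNorm p (coordVec S k α) := by
  have hchain : IsSchreierChain [{1}] := by
    refine ⟨by simp, ⟨?_, ?_⟩⟩
    · intro F hF
      simp only [List.mem_singleton] at hF
      subst hF
      exact ⟨fun h => by simp, Finset.singleton_nonempty 1⟩
    · exact List.isChain_singleton _
  have hmem : betaNorm p (coordVec S k α) [{1}] ∈ {r | ∃ Cy : List (Finset ℕ),
      IsSchreierChain Cy ∧ r = betaNorm p (coordVec S k α) Cy} := ⟨[{1}], hchain, rfl⟩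
  have h0 : 0 ≤ betaNorm p (coordVec S k α) [{1}] := by
    apply Real.rpow_nonneg
    apply List.sum_nonneg
    intro a ha
    rcases List.mem_map.mp ha with ⟨F, _, rfl⟩
    exact Real.rpow_nonneg (Finset.sum_nonneg fun i _ => abs_nonneg _) p
  exact h0.trans (le_csSup (coordVec_bddAbove p hp S hS k α) hmem)
lemma main_chain_bound (p : ℝ) (hp : 1 < p) (M N : Set ℕ) (hM : M.Infinite) (hN : N.Infinite)
    (hMpos : ∀ m ∈ M, 0 < m) (C : ℕ)
    (htau : ∀ J : Finset ℕ, IsSchreier (subImage N J) → tau1 (subImage M J) ≤ C)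
    (k : ℕ) (α : Fin k → ℝ) (Cx : List (Finset ℕ)) (hCx : IsSchreierChain Cx) :
    betaNorm p (coordVec N k α) Cx ≤ (C : ℝ) * baernsteinNorm p (coordVec M k α) := by
  obtain ⟨hCne, hCall, hCch⟩ := hCx
  have hp0 : (0:ℝ) < p := lt_trans one_pos hp
  have hpne : p ≠ 0 := ne_of_gt hp0
  set x : ℕ → ℝ := coordVec N k α with hxdef
  set y : ℕ → ℝ := coordVec M k α with hydef
  set AM : Finset ℕ → Finset ℕ := fun F => subImage M (Jv N k F) with hAM
  -- covers
  have hcov : ∀ F ∈ Cx, ∃ D, SchreierChainList D ∧ D.length ≤ C ∧ AM F ⊆ chainUnion D := by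
    intro F hF
    have hFs : IsSchreier F := (hCall F hF).1
    have hJs : IsSchreier (subImage N (Jv N k F)) :=
      schreier_subset hFs (subImage_Jv_subset N k F)
    apply exists_cover _ ?_ (htau _ hJs)
    intro a ha
    rcases Finset.mem_image.mp ha with ⟨i, _, rfl⟩
    exact hMpos _ (Nat.nth_mem_of_infinite hM i)
  choose! cov hcov1 hcov2 hcov3 using hcov
  set blk : Finset ℕ → List (Finset ℕ) :=
    fun F => ((cov F).map (fun G => G ∩ AM F)).filter (fun G => G.card != 0) with hblk
  set D : List (Finset ℕ) := (Cx.map blk).flatten with hDdef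
  -- membership decoding for blocks
  have hblk_mem : ∀ F G', G' ∈ blk F →
      (G' ⊆ AM F ∧ G'.Nonempty ∧ ∃ G ∈ cov F, G' = G ∩ AM F) := by
    intro F G' hG'
    rw [hblk] at hG'
    rcases List.mem_filter.mp hG' with ⟨hG'm, hG'c⟩
    rcases List.mem_map.mp hG'm with ⟨G, hG, rfl⟩
    refine ⟨Finset.inter_subset_right, ?_, G, hG, rfl⟩
    rw [← Finset.card_ne_zero]
    simpa using hG'c
  -- Step A
  have stepA : ∀ F ∈ Cx,
      (∑ n ∈ F, |x n|) ≤ ((blk F).map (fun G => ∑ m ∈ G, |y m|)).sum := by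
    intro F hF
    have e1 : (∑ n ∈ F, |x n|) = ∑ a ∈ AM F, |y a| := by
      rw [hxdef, coordVec_sum_abs N hN k α F, hydef, coordVec_sum_abs M hM k α (AM F),
        hAM, filter_AM M hM N k F]
    have e2 : ∑ a ∈ AM F, |y a| ≤
        ((cov F).map fun G => ∑ a ∈ G ∩ AM F, |y a|).sum :=
      sum_le_of_cover (fun a => abs_nonneg (y a)) (cov F) (AM F) (hcov3 F hF)
    have e3 : ((blk F).map (fun G => ∑ m ∈ G, |y m|)).sum =
        (((cov F).map (fun G => G ∩ AM F)).map (fun G => ∑ m ∈ G, |y m|)).sum := by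
      rw [hblk]
      apply filter_map_sum_eq
      intro a _ haq
      have : a.card = 0 := by simpa using haq
      rw [Finset.card_eq_zero.mp this]
      simp
    have e4 : (((cov F).map (fun G => G ∩ AM F)).map (fun G => ∑ m ∈ G, |y m|)).sum =
        ((cov F).map fun G => ∑ a ∈ G ∩ AM F, |y a|).sum := by
      rw [List.map_map]; rfl
    rw [e1, e3, e4]
    exact e2
  -- Step A'
  have stepA' : ∀ F ∈ Cx, (∑ n ∈ F, |x n|) ^ p ≤
      (C : ℝ) ^ p * ((blk F).map (fun G => (∑ m ∈ G, |y m|) ^ p)).sum := by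
    intro F hF
    have hlen : ((blk F).map (fun G => ∑ m ∈ G, |y m|)).length ≤ C := by
      rw [List.length_map, hblk]
      exact le_trans (List.length_filter_le _ _) (by simpa using hcov2 F hF)
    have h1 := sum_rpow_le p hp ((blk F).map (fun G => ∑ m ∈ G, |y m|))
      (by
        intro a ha
        rcases List.mem_map.mp ha with ⟨G, _, rfl⟩
        exact Finset.sum_nonneg fun i _ => abs_nonneg _) C hlen
    have h2 : (((blk F).map (fun G => ∑ m ∈ G, |y m|)).map (· ^ p)).sum =
        ((blk F).map (fun G => (∑ m ∈ G, |y m|) ^ p)).sum := by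
      rw [List.map_map]; rfl
    rw [h2] at h1
    refine le_trans ?_ h1
    exact Real.rpow_le_rpow (Finset.sum_nonneg fun i _ => abs_nonneg _) (stepA F hF)
      (le_of_lt hp0)
  -- Step B
  have stepB : (Cx.map fun F => (∑ n ∈ F, |x n|) ^ p).sum ≤
      (C : ℝ) ^ p * (D.map fun G => (∑ m ∈ G, |y m|) ^ p).sum := by
    have h1 : (Cx.map fun F => (∑ n ∈ F, |x n|) ^ p).sum ≤
        (Cx.map fun F =>
          (C : ℝ) ^ p * ((blk F).map (fun G => (∑ m ∈ G, |y m|) ^ p)).sum).sum :=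
      List.sum_le_sum stepA'
    have h2 : (Cx.map fun F =>
        (C : ℝ) ^ p * ((blk F).map (fun G => (∑ m ∈ G, |y m|) ^ p)).sum).sum =
        (C : ℝ) ^ p * (Cx.map fun F =>
          ((blk F).map (fun G => (∑ m ∈ G, |y m|) ^ p)).sum).sum :=
      List.sum_map_mul_left _ _ _
    have h3 : (D.map fun G => (∑ m ∈ G, |y m|) ^ p).sum =
        (Cx.map fun F => ((blk F).map (fun G => (∑ m ∈ G, |y m|) ^ p)).sum).sum := by
      rw [hDdef]
      rw [List.map_flatten, List.sum_flatten, List.map_map, List.map_map]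
      rfl
    rw [h3]
    exact h1.trans (le_of_eq h2)
  -- Step C : D is a Schreier chain when nonempty
  have stepC : D ≠ [] → IsSchreierChain D := by
    intro hDne
    refine ⟨hDne, ⟨?_, ?_⟩⟩
    · intro G' hG'
      rw [hDdef] at hG'
      rcases List.mem_flatten.mp hG' with ⟨bl, hbl, hG'bl⟩
      rcases List.mem_map.mp hbl with ⟨F, hF, rfl⟩
      rcases hblk_mem F G' hG'bl with ⟨-, hGne, G, hG, rfl⟩
      refine ⟨schreier_subset ((hcov1 F hF).1 G hG).1 Finset.inter_subset_left, hGne⟩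
    · have hpw : D.Pairwise succRel := by
        rw [hDdef]
        rw [List.pairwise_flatten]
        constructor
        · intro bl hbl
          rcases List.mem_map.mp hbl with ⟨F, hF, rfl⟩
          have hp1 : (cov F).Pairwise succRel :=
            pairwise_of_chain (fun G hG => ((hcov1 F hF).1 G hG).2) (hcov1 F hF).2
          have hp2 : ((cov F).map (fun G => G ∩ AM F)).Pairwise succRel := by
            apply List.Pairwise.map _ ?_ hp1
            intro G G' h a ha b hb
            exact h a (Finset.mem_inter.mp ha).1 b (Finset.mem_inter.mp hb).1
          exact List.Pairwise.sublist List.filter_sublist hp2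
        · rw [List.pairwise_map]
          have hpx : Cx.Pairwise succRel :=
            pairwise_of_chain (fun F hF => (hCall F hF).2) hCch
          refine hpx.imp ?_
          intro F F' h G' hG' G'' hG''
          have h1 : G' ⊆ AM F := (hblk_mem F G' hG').1
          have h2 : G'' ⊆ AM F' := (hblk_mem F' G'' hG'').1
          intro a ha b hb
          exact AM_succRel M N hM hN k h a (h1 ha) b (h2 hb)
      exact hpw.isChain
  -- assembly
  have h0x : 0 ≤ (Cx.map fun F => (∑ n ∈ F, |x n|) ^ p).sum := by
    apply List.sum_nonneg
    intro a ha
    rcases List.mem_map.mp ha with ⟨F, _, rfl⟩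
    exact Real.rpow_nonneg (Finset.sum_nonneg fun i _ => abs_nonneg _) p
  have h0y : 0 ≤ (D.map fun G => (∑ m ∈ G, |y m|) ^ p).sum := by
    apply List.sum_nonneg
    intro a ha
    rcases List.mem_map.mp ha with ⟨G, _, rfl⟩
    exact Real.rpow_nonneg (Finset.sum_nonneg fun i _ => abs_nonneg _) p
  have hfinal : betaNorm p x Cx ≤ (C : ℝ) * betaNorm p y D := by
    calc betaNorm p x Cx
        = ((Cx.map fun F => (∑ n ∈ F, |x n|) ^ p).sum) ^ (1 / p) := rfl
      _ ≤ ((C : ℝ) ^ p * (D.map fun G => (∑ m ∈ G, |y m|) ^ p).sum) ^ (1 / p) :=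
          Real.rpow_le_rpow h0x stepB (by positivity)
      _ = ((C : ℝ) ^ p) ^ (1 / p) *
          ((D.map fun G => (∑ m ∈ G, |y m|) ^ p).sum) ^ (1 / p) :=
          Real.mul_rpow (Real.rpow_nonneg (Nat.cast_nonneg C) p) h0y
      _ = (C : ℝ) * betaNorm p y D := by
          rw [← Real.rpow_mul (Nat.cast_nonneg C), mul_one_div_cancel hpne, Real.rpow_one]
          rfl
  have hlast : betaNorm p y D ≤ baernsteinNorm p y := by
    by_cases hDe : D = []
    · rw [hDe]
      have : betaNorm p y [] = 0 := by
        rw [betaNorm]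
        simp only [List.map_nil, List.sum_nil]
        exact Real.zero_rpow (by positivity)
      rw [this, hydef]
      exact baernstein_coordVec_nonneg p hp M hM k α
    · exact le_csSup (by rw [hydef]; exact coordVec_bddAbove p hp M hM k α)
        ⟨D, stepC hDe, rfl⟩
  refine hfinal.trans ?_
  exact mul_le_mul_of_nonneg_left hlast (Nat.cast_nonneg C)

/-- If ΓL₁(M, N) = C < ∞, then (e_m)_{m∈M} C-dominates (e_n)_{n∈N} in the Baernstein norm. -/
theorem baernstein_domination_of_GLindex (p : ℝ) (hp : 1 < p) (M N : Set ℕ)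
    (hM : M.Infinite) (hN : N.Infinite)
    (hMpos : ∀ m ∈ M, 0 < m) (hNpos : ∀ n ∈ N, 0 < n)
    (C : ℕ) (hGL : GLindex M N = (C : ℕ∞)) (k : ℕ) (α : Fin k → ℝ) :
    baernsteinNorm p (fun n => ∑ j : Fin k, if enumSet N (j : ℕ) = n then α j else 0) ≤
      (C : ℝ) *
        baernsteinNorm p (fun n => ∑ j : Fin k, if enumSet M (j : ℕ) = n then α j else 0) := by
  have htau : ∀ J : Finset ℕ, IsSchreier (subImage N J) → tau1 (subImage M J) ≤ C := by
    intro J hJ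
    have h1 : (tau1 (subImage M J) : ℕ∞) ≤ GLindex M N :=
      le_iSup₂ (f := fun (J : Finset ℕ)
        (_ : J ∈ {J : Finset ℕ | IsSchreier (subImage N J)}) =>
          (tau1 (subImage M J) : ℕ∞)) J hJ
    rw [hGL] at h1
    exact_mod_cast h1
  show baernsteinNorm p (coordVec N k α) ≤ (C : ℝ) * baernsteinNorm p (coordVec M k α)
  apply Real.sSup_le
  · rintro r ⟨Cx, hCx, rfl⟩
    exact main_chain_bound p hp M N hM hN hMpos C htau k α Cx hCx
  · exact mul_nonneg (Nat.cast_nonneg C) (baernstein_coordVec_nonneg p hp M hM k α)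
end
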